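/- arXiv:2512.21773 — 2 statements merged into one kernel-verified Lean document; each statement's English description precedes it below -/
import Mathlib

section
/- Exact adjoint relation with boundary term on a rectangular box (Proposition 3.1 on a box). Let d ≥ 1, s ∈ ℝ, let l, r ∈ ℝ^d with l_i ≤ r_i for all i, and set Ω = Π_{i=1}^d [l_i, r_i] ⊂ ℝ^d. Let a, u, v : ℝ^d → ℝ^d be continuously differentiable on an open neighborhood of Ω. Then ∫_Ω v · (A_s^a u) dx = − ∫_Ω (A_{1−s}^a v) · u dx + Σ_{i=1}^d ( ∫_{F_i^+} (v·u) a_i dσ − ∫_{F_i^−} (v·u) a_i dσ ), where F_i^+ (resp. F_i^−) is the face of Ω on which the i-th coordinate equals r_i (resp. l_i), the face integrals are (d−1)-dimensional Lebesgue integrals over the remaining coordinates ranging over Π_{j≠i}[l_j, r_j], and a_i is the i-th component of a. In inner-product/normal notation this reads ⟨v, A_s^a u⟩_Ω = ⟨−A_{1−s}^a v, u⟩_Ω + ∮_{∂Ω} (v·u)(a·n̂) dσ with n̂ the outward unit normal to ∂Ω. -/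
open MeasureTheory

/-- `pd f j x` is the partial derivative `∂_j f (x)`, i.e. the `j`-th component of the
Fréchet derivative of `f : ℝ^d → ℝ` at `x`. -/
noncomputable def pd {d : ℕ} (f : (Fin d → ℝ) → ℝ) (j : Fin d) (x : Fin d → ℝ) : ℝ :=
  fderiv ℝ f x (Pi.single j 1)

/-- `adv a s w x i` is the `i`-th component at `x` of the generalized linear advection
operator `(A_s^a w)(x) = ((a·∇)w)(x) + s (div a)(x) w(x)`. -/
noncomputable def adv {d : ℕ} (a : (Fin d → ℝ) → Fin d → ℝ) (s : ℝ)
    (w : (Fin d → ℝ) → Fin d → ℝ) (x : Fin d → ℝ) (i : Fin d) : ℝ :=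
  (∑ j, a x j * pd (fun y => w y i) j x)
    + s * (∑ j, pd (fun y => a y j) j x) * w x i

/-- `facePt i c y` is the point of `ℝ^d` whose `i`-th coordinate is `c` and whose
remaining coordinates are given by `y : ℝ^{d-1}` (indexed by `{j // j ≠ i}`): it
parametrizes the face `x_i = c` of a box by the remaining coordinates. -/
def facePt {d : ℕ} (i : Fin d) (c : ℝ) (y : {j : Fin d // j ≠ i} → ℝ) : Fin d → ℝ :=
  fun j => if h : j = i then c else y ⟨j, h⟩

private lemma pd_mul {d : ℕ} {f g : (Fin d → ℝ) → ℝ} {x : Fin d → ℝ} (j : Fin d)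
    (hf : DifferentiableAt ℝ f x) (hg : DifferentiableAt ℝ g x) :
    pd (fun y => f y * g y) j x = pd f j x * g x + f x * pd g j x := by
  unfold pd
  rw [fderiv_fun_mul hf hg]
  simp only [ContinuousLinearMap.add_apply, ContinuousLinearMap.coe_smul', Pi.smul_apply,
    smul_eq_mul]
  ring

private lemma pd_sum {d : ℕ} {ι : Type*} (t : Finset ι) {f : ι → (Fin d → ℝ) → ℝ}
    {x : Fin d → ℝ} (j : Fin d) (hf : ∀ k ∈ t, DifferentiableAt ℝ (f k) x) :
    pd (fun y => ∑ k ∈ t, f k y) j x = ∑ k ∈ t, pd (f k) j x := by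
  unfold pd
  rw [fderiv_fun_sum hf]
  simp

private lemma fderiv_pi_apply' {d : ℕ} {F : (Fin d → ℝ) → Fin d → ℝ} {x : Fin d → ℝ}
    (hF : DifferentiableAt ℝ F x) (w : Fin d → ℝ) (i : Fin d) :
    fderiv ℝ F x w i = fderiv ℝ (fun y => F y i) x w := by
  rw [fderiv_pi (fun i => differentiableAt_pi.1 hF i)]
  simp [ContinuousLinearMap.pi_apply]

private theorem alg (m : ℕ) (s : ℝ) (av uv vv da : Fin m → ℝ) (du dv : Fin m → Fin m → ℝ) :
    (∑ i, vv i * ((∑ j, av j * du i j) + s * (∑ j, da j) * uv i))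
      + (∑ i, ((∑ j, av j * dv i j) + (1-s) * (∑ j, da j) * vv i) * uv i)
    = ∑ j, ((∑ k, (dv k j * uv k + vv k * du k j)) * av j + (∑ k, vv k * uv k) * da j) := by
  simp only [Finset.mul_sum, Finset.sum_mul, mul_add, add_mul, Finset.sum_add_distrib]
  simp only [← Finset.sum_add_distrib]
  rw [Finset.sum_comm]
  exact Finset.sum_congr rfl fun j _ => Finset.sum_congr rfl fun i _ => by ring

/-- The vector field whose divergence we integrate: `F_j = (v·u) a_j`. -/
private noncomputable def Fvec {d : ℕ} (a u v : (Fin d → ℝ) → Fin d → ℝ)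
    (x : Fin d → ℝ) (j : Fin d) : ℝ :=
  (∑ k, v x k * u x k) * a x j

/-- Exact adjoint relation with boundary term on a rectangular box
`Ω = Π_i [l_i, r_i]`: for `a, u, v` continuously differentiable on an open neighborhood
`U` of `Ω`, one has
`∫_Ω v·(A_s^a u) = −∫_Ω (A_{1−s}^a v)·u + Σ_i (∫_{F_i^+} (v·u) a_i − ∫_{F_i^−} (v·u) a_i)`,
where `F_i^±` are the faces `x_i = r_i` and `x_i = l_i`, parametrized by the remaining
coordinates ranging over `Π_{j≠i}[l_j, r_j]` with `(d−1)`-dimensional Lebesgue measure. -/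
theorem advection_adjoint_with_boundary_on_box
    (d : ℕ) (hd : 1 ≤ d) (s : ℝ) (l r : Fin d → ℝ) (hlr : ∀ i, l i ≤ r i)
    (a u v : (Fin d → ℝ) → Fin d → ℝ)
    (U : Set (Fin d → ℝ)) (hU : IsOpen U) (hΩU : Set.Icc l r ⊆ U)
    (ha : ContDiffOn ℝ 1 a U) (hu : ContDiffOn ℝ 1 u U) (hv : ContDiffOn ℝ 1 v U) :
    ∫ x in Set.Icc l r, ∑ i, v x i * adv a s u x i
      = (- ∫ x in Set.Icc l r, ∑ i, adv a (1 - s) v x i * u x i)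
        + ∑ i : Fin d,
            ((∫ y in Set.Icc (fun j : {j : Fin d // j ≠ i} => l j.1)
                            (fun j : {j : Fin d // j ≠ i} => r j.1),
                (∑ k, v (facePt i (r i) y) k * u (facePt i (r i) y) k)
                  * a (facePt i (r i) y) i)
             - ∫ y in Set.Icc (fun j : {j : Fin d // j ≠ i} => l j.1)
                             (fun j : {j : Fin d // j ≠ i} => r j.1),
                (∑ k, v (facePt i (l i) y) k * u (facePt i (l i) y) k)
                  * a (facePt i (l i) y) i) := by
  obtain ⟨n, rfl⟩ : ∃ n, d = n + 1 := ⟨d - 1, (Nat.succ_pred_eq_of_pos hd).symm⟩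
  have hlr' : l ≤ r := fun i => hlr i
  have haj : ∀ j, ContDiffOn ℝ 1 (fun y => a y j) U := fun j => contDiffOn_pi.1 ha j
  have huj : ∀ j, ContDiffOn ℝ 1 (fun y => u y j) U := fun j => contDiffOn_pi.1 hu j
  have hvj : ∀ j, ContDiffOn ℝ 1 (fun y => v y j) U := fun j => contDiffOn_pi.1 hv j
  have hdiff : ∀ (f : (Fin (n+1) → ℝ) → ℝ), ContDiffOn ℝ 1 f U →
      ∀ x ∈ U, DifferentiableAt ℝ f x := fun f hf x hx =>
    (hf.differentiableOn one_ne_zero).differentiableAt (hU.mem_nhds hx)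
  have hPc : ContDiffOn ℝ 1 (fun x => ∑ k, v x k * u x k) U :=
    ContDiffOn.sum fun k _ => (hvj k).mul (huj k)
  have hFc : ContDiffOn ℝ 1 (Fvec a u v) U :=
    contDiffOn_pi.2 fun j => hPc.mul (haj j)
  have hpdc : ∀ (f : (Fin (n+1) → ℝ) → ℝ), ContDiffOn ℝ 1 f U → ∀ j,
      ContinuousOn (fun x => pd f j x) U := fun f hf j =>
    ((hf.continuousOn_fderiv_of_isOpen hU le_rfl).clm_apply continuousOn_const)
  -- pointwise identity between the advection integrands and the divergence of `Fvec`
  have key : ∀ x ∈ U,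
      (∑ i, v x i * adv a s u x i) + (∑ i, adv a (1-s) v x i * u x i)
        = ∑ j, fderiv ℝ (Fvec a u v) x (Pi.single j 1) j := by
    intro x hx
    have hui : ∀ i, DifferentiableAt ℝ (fun y => u y i) x := fun i => hdiff _ (huj i) x hx
    have hvi : ∀ i, DifferentiableAt ℝ (fun y => v y i) x := fun i => hdiff _ (hvj i) x hx
    have hai : ∀ i, DifferentiableAt ℝ (fun y => a y i) x := fun i => hdiff _ (haj i) x hx
    have hPd : DifferentiableAt ℝ (fun x => ∑ k, v x k * u x k) x :=
      DifferentiableAt.fun_sum fun k _ => (hvi k).mul (hui k)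
    have hFd : DifferentiableAt ℝ (Fvec a u v) x :=
      differentiableAt_pi.2 fun j => hPd.mul (hai j)
    have hstep : ∀ j : Fin (n+1), fderiv ℝ (Fvec a u v) x (Pi.single j 1) j
        = (∑ k, (pd (fun y => v y k) j x * u x k + v x k * pd (fun y => u y k) j x)) * a x j
          + (∑ k, v x k * u x k) * pd (fun y => a y j) j x := by
      intro j
      rw [fderiv_pi_apply' hFd (Pi.single j 1) j]
      have h1 : (fun y => Fvec a u v y j)
          = fun y => (∑ k, v y k * u y k) * a y j := rfl
      rw [show fderiv ℝ (fun y => Fvec a u v y j) x (Pi.single j 1)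
            = pd (fun y => (∑ k, v y k * u y k) * a y j) j x from by rw [pd, ← h1]]
      rw [pd_mul j hPd (hai j),
        pd_sum (f := fun k y => v y k * u y k) Finset.univ j (fun k _ => (hvi k).mul (hui k)),
        Finset.sum_congr rfl fun k _ => pd_mul j (hvi k) (hui k)]
    rw [show (∑ j, fderiv ℝ (Fvec a u v) x (Pi.single j 1) j)
          = ∑ j, ((∑ k, (pd (fun y => v y k) j x * u x k + v x k * pd (fun y => u y k) j x))
              * a x j + (∑ k, v x k * u x k) * pd (fun y => a y j) j x)
        from Finset.sum_congr rfl fun j _ => hstep j]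
    simp only [adv]
    exact alg (n+1) s (fun j => a x j) (fun k => u x k) (fun k => v x k)
      (fun j => pd (fun y => a y j) j x)
      (fun i j => pd (fun y => u y i) j x) (fun i j => pd (fun y => v y i) j x)
  -- continuity/integrability of the advection integrands
  have hadvC : ∀ (w : (Fin (n+1) → ℝ) → Fin (n+1) → ℝ), ContDiffOn ℝ 1 w U → ∀ (σ : ℝ) (i),
      ContinuousOn (fun x => adv a σ w x i) U := by
    intro w hw σ i
    simp only [adv]
    exact (continuousOn_finset_sum _ fun j _ =>
        (haj j).continuousOn.mul (hpdc _ (contDiffOn_pi.1 hw i) j)).add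
      ((continuousOn_const.mul
        (continuousOn_finset_sum _ fun j _ => hpdc _ (haj j) j)).mul
        (contDiffOn_pi.1 hw i).continuousOn)
  have hI1 : IntegrableOn (fun x => ∑ i, v x i * adv a s u x i) (Set.Icc l r) :=
    ContinuousOn.integrableOn_compact isCompact_Icc
      ((continuousOn_finset_sum _ fun i _ =>
        (hvj i).continuousOn.mul (hadvC u hu s i)).mono hΩU)
  have hI2 : IntegrableOn (fun x => ∑ i, adv a (1-s) v x i * u x i) (Set.Icc l r) :=
    ContinuousOn.integrableOn_compact isCompact_Icc
      ((continuousOn_finset_sum _ fun i _ =>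
        (hadvC v hv (1-s) i).mul (huj i).continuousOn).mono hΩU)
  -- divergence theorem
  have hF'cont : ContinuousOn (fun x => fderiv ℝ (Fvec a u v) x) U :=
    hFc.continuousOn_fderiv_of_isOpen hU le_rfl
  have HiF : IntegrableOn
      (fun x => ∑ j, fderiv ℝ (Fvec a u v) x (Pi.single j 1) j) (Set.Icc l r) := by
    apply ContinuousOn.integrableOn_compact isCompact_Icc
    exact continuousOn_finset_sum _ fun j _ =>
      (continuous_apply j).comp_continuousOn
        ((hF'cont.mono hΩU).clm_apply continuousOn_const)
  have HdF : ∀ x ∈ (Set.univ.pi fun i => Set.Ioo (l i) (r i)) \ (∅ : Set _),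
      HasFDerivAt (Fvec a u v) (fderiv ℝ (Fvec a u v) x) x := by
    intro x hx
    have hxU : x ∈ U := hΩU (by
      rw [← Set.pi_univ_Icc]
      exact Set.pi_mono (fun i _ => Set.Ioo_subset_Icc_self) hx.1)
    exact ((hFc.differentiableOn one_ne_zero).differentiableAt (hU.mem_nhds hxU)).hasFDerivAt
  have div := integral_divergence_of_hasFDerivAt_off_countable l r hlr' (Fvec a u v)
    (fun x => fderiv ℝ (Fvec a u v) x) ∅ Set.countable_empty ((hFc.continuousOn).mono hΩU)
    HdF HiF
  have hsum : ∫ x in Set.Icc l r, ∑ j, fderiv ℝ (Fvec a u v) x (Pi.single j 1) j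
      = (∫ x in Set.Icc l r, ∑ i, v x i * adv a s u x i)
        + ∫ x in Set.Icc l r, ∑ i, adv a (1-s) v x i * u x i := by
    rw [← integral_add hI1 hI2]
    exact setIntegral_congr_fun measurableSet_Icc (fun x hx => (key x (hΩU hx)).symm)
  -- face integrals
  have face : ∀ (i : Fin (n+1)) (c : ℝ),
      (∫ y in Set.Icc (fun j : {j : Fin (n+1) // j ≠ i} => l j.1)
                      (fun j : {j : Fin (n+1) // j ≠ i} => r j.1),
          (∑ k, v (facePt i c y) k * u (facePt i c y) k) * a (facePt i c y) i)
      = ∫ x in Set.Icc (l ∘ i.succAbove) (r ∘ i.succAbove),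
          Fvec a u v (i.insertNth c x) i := by
    intro i c
    set T := MeasurableEquiv.piCongrLeft (fun _ : {j : Fin (n+1) // j ≠ i} => ℝ)
      (finSuccAboveEquiv i) with hT
    have hTval : ∀ (x : Fin n → ℝ) (k : Fin n),
        T x ⟨i.succAbove k, i.succAbove_ne k⟩ = x k := by
      intro x k
      have h : (⟨i.succAbove k, i.succAbove_ne k⟩ : {j : Fin (n+1) // j ≠ i})
          = finSuccAboveEquiv i k := by
        rw [finSuccAboveEquiv_apply]
      rw [h]
      exact Equiv.piCongrLeft_apply_apply (P := fun _ : {j : Fin (n+1) // j ≠ i} => ℝ)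
        (e := finSuccAboveEquiv i) x k
    have hfp : ∀ (x : Fin n → ℝ), facePt i c (T x) = i.insertNth c x := by
      intro x
      funext j
      rcases eq_or_ne j i with rfl | hj
      · simp [facePt, Fin.insertNth_apply_same]
      · obtain ⟨k, rfl⟩ := Fin.exists_succAbove_eq hj
        rw [Fin.insertNth_apply_succAbove]
        show (if h : i.succAbove k = i then c else T x ⟨i.succAbove k, h⟩) = x k
        rw [dif_neg (i.succAbove_ne k)]
        exact hTval x k
    have hpre : T ⁻¹' (Set.Icc (fun j : {j : Fin (n+1) // j ≠ i} => l j.1)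
          (fun j : {j : Fin (n+1) // j ≠ i} => r j.1))
        = Set.Icc (l ∘ i.succAbove) (r ∘ i.succAbove) := by
      ext x
      simp only [Set.mem_preimage, Set.mem_Icc, Pi.le_def, Function.comp_apply]
      constructor
      · rintro ⟨h1, h2⟩
        refine ⟨fun k => ?_, fun k => ?_⟩
        · have := h1 ⟨i.succAbove k, i.succAbove_ne k⟩
          rwa [hTval] at this
        · have := h2 ⟨i.succAbove k, i.succAbove_ne k⟩
          rwa [hTval] at this
      · rintro ⟨h1, h2⟩
        refine ⟨fun j => ?_, fun j => ?_⟩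
        · obtain ⟨k, hk⟩ := Fin.exists_succAbove_eq j.2
          have hj : j = ⟨i.succAbove k, i.succAbove_ne k⟩ := Subtype.ext hk.symm
          rw [hj, hTval]
          exact h1 k
        · obtain ⟨k, hk⟩ := Fin.exists_succAbove_eq j.2
          have hj : j = ⟨i.succAbove k, i.succAbove_ne k⟩ := Subtype.ext hk.symm
          rw [hj, hTval]
          exact h2 k
    rw [← MeasurePreserving.setIntegral_preimage_emb
        (volume_measurePreserving_piCongrLeft (fun _ : {j : Fin (n+1) // j ≠ i} => ℝ)
          (finSuccAboveEquiv i)) (MeasurableEquiv.measurableEmbedding _)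
        (fun y => (∑ k, v (facePt i c y) k * u (facePt i c y) k) * a (facePt i c y) i) _]
    rw [show ⇑(MeasurableEquiv.piCongrLeft (fun _ : {j : Fin (n+1) // j ≠ i} => ℝ)
          (finSuccAboveEquiv i)) ⁻¹' _ = Set.Icc (l ∘ i.succAbove) (r ∘ i.succAbove) from hpre]
    exact setIntegral_congr_fun measurableSet_Icc (fun x _ => by
      show (∑ k, v (facePt i c (T x)) k * u (facePt i c (T x)) k) * a (facePt i c (T x)) i = _
      rw [hfp x]
      rfl)
  rw [div] at hsum
  rw [show (∑ i : Fin (n+1),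
        ((∫ y in Set.Icc (fun j : {j : Fin (n+1) // j ≠ i} => l j.1)
                        (fun j : {j : Fin (n+1) // j ≠ i} => r j.1),
            (∑ k, v (facePt i (r i) y) k * u (facePt i (r i) y) k) * a (facePt i (r i) y) i)
         - ∫ y in Set.Icc (fun j : {j : Fin (n+1) // j ≠ i} => l j.1)
                         (fun j : {j : Fin (n+1) // j ≠ i} => r j.1),
            (∑ k, v (facePt i (l i) y) k * u (facePt i (l i) y) k) * a (facePt i (l i) y) i))
      = ∑ i : Fin (n+1),
          ((∫ x in Set.Icc (l ∘ i.succAbove) (r ∘ i.succAbove),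
              Fvec a u v (i.insertNth (r i) x) i)
           - ∫ x in Set.Icc (l ∘ i.succAbove) (r ∘ i.succAbove),
              Fvec a u v (i.insertNth (l i) x) i)
      from Finset.sum_congr rfl fun i _ => by rw [face i (r i), face i (l i)]]
  linarith [hsum]
end

section
/- Boundary quadratic identity for the skew-symmetric form on a box. Let d ≥ 1, let l, r ∈ ℝ^d with l_i ≤ r_i for all i, and set Ω = Π_{i=1}^d [l_i, r_i]. Let a, u : ℝ^d → ℝ^d be continuously differentiable on an open neighborhood of Ω. Then ∫_Ω u · ( (a·∇)u + (1/2)(div a) u ) dx = (1/2) Σ_{i=1}^d ( ∫_{F_i^+} |u|² a_i dσ − ∫_{F_i^−} |u|² a_i dσ ), where F_i^+ (resp. F_i^−) is the face of Ω on which the i-th coordinate equals r_i (resp. l_i), |u|² = u·u, and the face integrals are (d−1)-dimensional Lebesgue integrals; equivalently the left side equals (1/2) ∮_{∂Ω} |u|² (a·n̂) dσ with n̂ the outward unit normal. -/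
open MeasureTheory

lemma alg_s7 {d : ℕ} (V A : Fin d → ℝ) (P : Fin d → Fin d → ℝ) (Q : Fin d → ℝ) :
    ∑ i, V i * ((∑ j, A j * P i j) + (1/2 : ℝ) * (∑ j, Q j) * V i)
      = (1/2 : ℝ) * ∑ i, ((∑ k, V k * V k) * Q i + A i * ∑ k, 2 * V k * P k i) := by
  simp only [mul_add, Finset.sum_add_distrib, Finset.mul_sum, Finset.sum_mul]
  rw [add_comm]
  congr 1
  · rw [Finset.sum_comm]
    exact Finset.sum_congr rfl fun i _ => Finset.sum_congr rfl fun j _ => by ring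
  · rw [Finset.sum_comm]
    exact Finset.sum_congr rfl fun i _ => Finset.sum_congr rfl fun j _ => by ring

lemma face_integral_eq {n : ℕ} (i : Fin (n+1)) (l r : Fin (n+1) → ℝ) (c : ℝ)
    (G : (Fin (n+1) → ℝ) → ℝ) :
    ∫ y in Set.Icc (fun j : {j : Fin (n+1) // j ≠ i} => l j.1)
                   (fun j : {j : Fin (n+1) // j ≠ i} => r j.1), G (facePt i c y)
      = ∫ x in Set.Icc (l ∘ i.succAbove) (r ∘ i.succAbove), G (i.insertNth c x) := by
  set e := finSuccAboveEquiv i with he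
  set T := MeasurableEquiv.piCongrLeft (fun _ : {j : Fin (n+1) // j ≠ i} => ℝ) e with hT
  have hmp : MeasurePreserving T volume volume :=
    volume_measurePreserving_piCongrLeft (fun _ => ℝ) e
  have hemb := T.measurableEmbedding
  have hTapp : ∀ (x : Fin n → ℝ) (k : Fin n), T x (e k) = x k := fun x k => by
    rw [hT]
    exact MeasurableEquiv.piCongrLeft_apply_apply (β := fun _ : {x : Fin (n+1) // x ≠ i} => ℝ) e x k
  have hpre : T ⁻¹' (Set.Icc (fun j : {j : Fin (n+1) // j ≠ i} => l j.1)
      (fun j : {j : Fin (n+1) // j ≠ i} => r j.1))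
      = Set.Icc (l ∘ i.succAbove) (r ∘ i.succAbove) := by
    ext x
    simp only [Set.mem_preimage, Set.mem_Icc, Pi.le_def, Function.comp_apply]
    constructor
    · rintro ⟨h1, h2⟩
      refine ⟨fun k => ?_, fun k => ?_⟩
      · have := h1 (e k); rwa [hTapp, he, finSuccAboveEquiv_apply] at this
      · have := h2 (e k); rwa [hTapp, he, finSuccAboveEquiv_apply] at this
    · rintro ⟨h1, h2⟩
      refine ⟨fun b => ?_, fun b => ?_⟩
      · obtain ⟨k, rfl⟩ := e.surjective b
        rw [hTapp, he, finSuccAboveEquiv_apply]; exact h1 k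
      · obtain ⟨k, rfl⟩ := e.surjective b
        rw [hTapp, he, finSuccAboveEquiv_apply]; exact h2 k
  have hpt : ∀ x : Fin n → ℝ, facePt i c (T x) = i.insertNth c x := by
    intro x
    funext j
    rcases eq_or_ne j i with rfl | hj
    · simp [facePt, Fin.insertNth_apply_same]
    · obtain ⟨k, rfl⟩ := Fin.exists_succAbove_eq hj
      have hb : (⟨i.succAbove k, hj⟩ : {j : Fin (n+1) // j ≠ i}) = e k := by
        rw [he, finSuccAboveEquiv_apply]
      simp only [facePt, dif_neg hj, Fin.insertNth_apply_succAbove, hb, hTapp]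
  have := hmp.setIntegral_preimage_emb hemb (fun y => G (facePt i c y))
    (Set.Icc (fun j : {j : Fin (n+1) // j ≠ i} => l j.1)
      (fun j : {j : Fin (n+1) // j ≠ i} => r j.1))
  rw [hpre] at this
  rw [← this]
  exact setIntegral_congr_fun measurableSet_Icc (fun x _ => by rw [hpt])

/-- Boundary quadratic identity for the skew-symmetric form on a box
`Ω = Π_i [l_i, r_i]`: for `a, u` continuously differentiable on an open neighborhood `U`
of `Ω`,
`∫_Ω u·((a·∇)u + (1/2)(div a) u) = (1/2) Σ_i (∫_{F_i^+} |u|² a_i − ∫_{F_i^−} |u|² a_i)`,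
where `F_i^±` are the faces `x_i = r_i` and `x_i = l_i`, parametrized by the remaining
coordinates ranging over `Π_{j≠i}[l_j, r_j]` with `(d−1)`-dimensional Lebesgue measure. -/
theorem skew_symmetric_quadratic_boundary_identity_on_box
    (d : ℕ) (hd : 1 ≤ d) (l r : Fin d → ℝ) (hlr : ∀ i, l i ≤ r i)
    (a u : (Fin d → ℝ) → Fin d → ℝ)
    (U : Set (Fin d → ℝ)) (hU : IsOpen U) (hΩU : Set.Icc l r ⊆ U)
    (ha : ContDiffOn ℝ 1 a U) (hu : ContDiffOn ℝ 1 u U) :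
    ∫ x in Set.Icc l r, ∑ i, u x i * ((∑ j, a x j * pd (fun y => u y i) j x)
        + (1 / 2 : ℝ) * (∑ j, pd (fun y => a y j) j x) * u x i)
      = (1 / 2 : ℝ) * ∑ i : Fin d,
          ((∫ y in Set.Icc (fun j : {j : Fin d // j ≠ i} => l j.1)
                          (fun j : {j : Fin d // j ≠ i} => r j.1),
              (∑ k, u (facePt i (r i) y) k * u (facePt i (r i) y) k)
                * a (facePt i (r i) y) i)
           - ∫ y in Set.Icc (fun j : {j : Fin d // j ≠ i} => l j.1)
                           (fun j : {j : Fin d // j ≠ i} => r j.1),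
              (∑ k, u (facePt i (l i) y) k * u (facePt i (l i) y) k)
                * a (facePt i (l i) y) i) := by
  obtain ⟨n, rfl⟩ : ∃ n, d = n + 1 := ⟨d - 1, by omega⟩
  have hlr' : l ≤ r := hlr
  set g : (Fin (n+1) → ℝ) → ℝ := fun x => ∑ k, u x k * u x k with hgdef
  have huc : ∀ i, ContDiffOn ℝ 1 (fun y => u y i) U := contDiffOn_pi.1 hu
  have hac : ∀ i, ContDiffOn ℝ 1 (fun y => a y i) U := contDiffOn_pi.1 ha
  have hgc : ContDiffOn ℝ 1 g U := ContDiffOn.sum (fun k _ => (huc k).mul (huc k))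
  have hud : ∀ x ∈ U, ∀ k, DifferentiableAt ℝ (fun y => u y k) x := fun x hx k =>
    ((huc k).contDiffAt (hU.mem_nhds hx)).differentiableAt one_ne_zero
  have had : ∀ x ∈ U, ∀ k, DifferentiableAt ℝ (fun y => a y k) x := fun x hx k =>
    ((hac k).contDiffAt (hU.mem_nhds hx)).differentiableAt one_ne_zero
  have hgd : ∀ x ∈ U, DifferentiableAt ℝ g x := fun x hx =>
    ((hgc.contDiffAt (hU.mem_nhds hx)).differentiableAt one_ne_zero)
  set f' : Fin (n+1) → (Fin (n+1) → ℝ) → (Fin (n+1) → ℝ) →L[ℝ] ℝ := fun i x =>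
    g x • fderiv ℝ (fun y => a y i) x + a x i • fderiv ℝ g x with hf'def
  have hgder : ∀ x ∈ U, ∀ j : Fin (n+1), fderiv ℝ g x (Pi.single j 1)
      = ∑ k, 2 * u x k * pd (fun y => u y k) j x := by
    intro x hx j
    have H : HasFDerivAt g (∑ k, (u x k • fderiv ℝ (fun y => u y k) x
        + u x k • fderiv ℝ (fun y => u y k) x)) x :=
      HasFDerivAt.fun_sum (fun k _ =>
        ((hud x hx k).hasFDerivAt).fun_mul ((hud x hx k).hasFDerivAt))
    rw [H.fderiv]
    simp only [ContinuousLinearMap.coe_sum', Finset.sum_apply,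
      ContinuousLinearMap.add_apply, ContinuousLinearMap.coe_smul',
      Pi.smul_apply, smul_eq_mul, pd]
    exact Finset.sum_congr rfl fun k _ => by ring
  have hHd : ∀ x ∈ U, ∀ i, HasFDerivAt (fun y => g y * a y i) (f' i x) x := by
    intro x hx i
    exact ((hgd x hx).hasFDerivAt).mul ((had x hx i).hasFDerivAt)
  have hval : ∀ x ∈ U, ∀ i : Fin (n+1), f' i x (Pi.single i 1)
      = g x * pd (fun y => a y i) i x + a x i * ∑ k, 2 * u x k * pd (fun y => u y k) i x := by
    intro x hx i
    rw [hf'def]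
    simp only [ContinuousLinearMap.add_apply, ContinuousLinearMap.coe_smul',
      Pi.smul_apply, smul_eq_mul, pd]
    rw [hgder x hx i]
    rfl
  have key : ∀ x ∈ Set.Icc l r,
      (∑ i, u x i * ((∑ j, a x j * pd (fun y => u y i) j x)
        + (1 / 2 : ℝ) * (∑ j, pd (fun y => a y j) j x) * u x i))
      = (1 / 2 : ℝ) * ∑ i, f' i x (Pi.single i 1) := by
    intro x hx
    have hx' := hΩU hx
    have := alg_s7 (u x) (a x) (fun i j => pd (fun y => u y i) j x)
      (fun j => pd (fun y => a y j) j x)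
    rw [this]
    congr 1
    exact Finset.sum_congr rfl fun i _ => (hval x hx' i).symm
  -- continuity / integrability
  have hgcont : ContinuousOn g U := hgc.continuousOn
  have Hc : ∀ i : Fin (n+1), ContinuousOn (fun y => g y * a y i) (Set.Icc l r) :=
    fun i => (hgcont.mul (hac i).continuousOn).mono hΩU
  have hsub : (Set.pi Set.univ fun i => Set.Ioo (l i) (r i)) ⊆ Set.Icc l r := by
    rw [← Set.pi_univ_Icc]
    exact Set.pi_mono fun i _ => Set.Ioo_subset_Icc_self
  have Hd : ∀ x ∈ (Set.pi Set.univ fun i => Set.Ioo (l i) (r i)) \ (∅ : Set _), ∀ i,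
      HasFDerivAt (fun y => g y * a y i) (f' i x) x := fun x hx i =>
    hHd x (hΩU (hsub hx.1)) i
  have hfg : ContinuousOn (fderiv ℝ g) U := hgc.continuousOn_fderiv_of_isOpen hU le_rfl
  have hfa : ∀ i, ContinuousOn (fderiv ℝ (fun y => a y i)) U := fun i =>
    (hac i).continuousOn_fderiv_of_isOpen hU le_rfl
  have Hi : IntegrableOn (fun x => ∑ i, f' i x (Pi.single i 1)) (Set.Icc l r) := by
    apply ContinuousOn.integrableOn_compact isCompact_Icc
    apply continuousOn_finset_sum
    intro i _
    have h1 : ContinuousOn (fun x => (fderiv ℝ (fun y => a y i) x) (Pi.single i 1)) U :=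
      (ContinuousLinearMap.apply ℝ ℝ ((Pi.single i 1 : Fin (n+1) → ℝ))).continuous.comp_continuousOn
        (hfa i)
    have h2 : ContinuousOn (fun x => (fderiv ℝ g x) (Pi.single i 1)) U :=
      (ContinuousLinearMap.apply ℝ ℝ ((Pi.single i 1 : Fin (n+1) → ℝ))).continuous.comp_continuousOn
        hfg
    have : ContinuousOn (fun x => f' i x (Pi.single i 1)) U := by
      simp only [hf'def, ContinuousLinearMap.add_apply, ContinuousLinearMap.coe_smul',
        Pi.smul_apply, smul_eq_mul]
      exact (hgcont.mul h1).add (((hac i).continuousOn).mul h2)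
    exact this.mono hΩU
  have hdiv := integral_divergence_of_hasFDerivAt_off_countable' l r hlr'
    (fun i x => g x * a x i) f' ∅ Set.countable_empty Hc Hd Hi
  rw [setIntegral_congr_fun measurableSet_Icc (fun x hx => key x hx),
    integral_const_mul, hdiv]
  congr 1
  refine Finset.sum_congr rfl fun i _ => ?_
  have h1 := face_integral_eq i l r (r i) (fun p => g p * a p i)
  have h2 := face_integral_eq i l r (l i) (fun p => g p * a p i)
  rw [h1, h2]
end
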